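/- arXiv:0801.3951 — 13 statements merged into one kernel-verified Lean document; each statement's English description precedes it below -/
import Mathlib

section
/- For every natural number n, the n-th power of the matrix product T·S is given explicitly by (T·S)^n = (1/sin(π/q)) · [[sin((n+1)π/q), −sin(nπ/q)], [sin(nπ/q), −sin((n−1)π/q)]]. -/
open Matrix Real

private lemma sin_rec (x t : ℝ) :
    Real.sin ((x + 1) * t) = 2 * Real.cos t * Real.sin (x * t) - Real.sin ((x - 1) * t) := by
  rw [show (x + 1) * t = x * t + t by ring, show (x - 1) * t = x * t - t by ring,
    Real.sin_add, Real.sin_sub]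
  ring

/-- For every natural number n, the n-th power of T·S is given by
(T·S)^n = (1/sin(π/q)) · [[sin((n+1)π/q), −sin(nπ/q)], [sin(nπ/q), −sin((n−1)π/q)]],
where q ≥ 3, λ = 2cos(π/q), S = [[0,−1],[1,0]], T = [[1,λ],[0,1]]. -/
theorem TS_pow_explicit (q : ℕ) (hq : 3 ≤ q) (lam : ℝ)
    (hlam : lam = 2 * Real.cos (Real.pi / q))
    (S T : Matrix (Fin 2) (Fin 2) ℝ)
    (hS : S = !![0, -1; 1, 0]) (hT : T = !![1, lam; 0, 1]) (n : ℕ) :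
    (T * S) ^ n = (Real.sin (Real.pi / q))⁻¹ •
      !![Real.sin (((n : ℝ) + 1) * Real.pi / q), -Real.sin ((n : ℝ) * Real.pi / q);
         Real.sin ((n : ℝ) * Real.pi / q), -Real.sin (((n : ℝ) - 1) * Real.pi / q)] := by
  have hq1 : (1 : ℝ) < q := by exact_mod_cast lt_of_lt_of_le (by norm_num) hq
  have hs : Real.sin (Real.pi / q) ≠ 0 := by
    apply ne_of_gt
    apply Real.sin_pos_of_pos_of_lt_pi
    · positivity
    · exact div_lt_self Real.pi_pos hq1
  have hTS : T * S = !![lam, -1; 1, 0] := by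
    rw [hS, hT]
    norm_num [Matrix.mul_fin_two]
  induction n with
  | zero =>
      simp only [pow_zero, Nat.cast_zero]
      ext i j
      fin_cases i <;> fin_cases j <;>
        simp [Matrix.one_apply, inv_mul_cancel₀ hs, Real.sin_neg, neg_div,
          show ((0:ℝ) + 1) * Real.pi / q = Real.pi / q by ring,
          show ((0:ℝ) - 1) * Real.pi / q = -(Real.pi / q) by ring]
  | succ n ih =>
      have h2 : Real.sin (((n : ℝ) + 1 + 1) * Real.pi / q) =
          Real.sin (((n : ℝ) + 1) * Real.pi / q) * lam - Real.sin ((n : ℝ) * Real.pi / q) := by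
        rw [show ((n:ℝ) + 1 + 1) * Real.pi / q = (((n:ℝ) + 1) + 1) * (Real.pi / q) by ring,
          sin_rec, show ((n:ℝ) + 1 - 1) * (Real.pi / q) = (n:ℝ) * Real.pi / q by ring,
          show ((n:ℝ) + 1) * (Real.pi / q) = ((n:ℝ) + 1) * Real.pi / q by ring, hlam]
        ring
      have h3 : Real.sin (((n : ℝ) + 1) * Real.pi / q) =
          Real.sin ((n : ℝ) * Real.pi / q) * lam - Real.sin (((n : ℝ) - 1) * Real.pi / q) := by
        rw [show ((n:ℝ) + 1) * Real.pi / q = ((n:ℝ) + 1) * (Real.pi / q) by ring,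
          sin_rec, show ((n:ℝ) - 1) * (Real.pi / q) = ((n:ℝ) - 1) * Real.pi / q by ring,
          show (n:ℝ) * (Real.pi / q) = (n:ℝ) * Real.pi / q by ring, hlam]
        ring
      rw [pow_succ, ih, hTS, Matrix.smul_mul]
      congr 1
      rw [Matrix.mul_fin_two]
      push_cast
      rw [show ((n:ℝ) + 1 - 1) * Real.pi / q = (n:ℝ) * Real.pi / q by ring, h2, h3]
      ext i j
      fin_cases i <;> fin_cases j <;> simp <;> ring
end

section
/- In SL(2,ℝ) one has (S·T)^q = −I₂ (so (ST)^q is the identity in PSL(2,ℝ)), and for every integer k with 1 ≤ k < q one has (S·T)^k ≠ I₂ and (S·T)^k ≠ −I₂; hence the image of S·T in PSL(2,ℝ) has exact order q. -/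
open Matrix Real

lemma pow_formula (θ : ℝ) (hs : Real.sin θ ≠ 0) (n : ℕ) :
    (!![0, -1; 1, 2 * Real.cos θ] : Matrix (Fin 2) (Fin 2) ℝ) ^ (n + 1) =
      !![-Real.sin (n * θ) / Real.sin θ,
         -Real.sin ((n + 1) * θ) / Real.sin θ;
         Real.sin ((n + 1) * θ) / Real.sin θ,
         Real.sin ((n + 2) * θ) / Real.sin θ] := by
  have key : ∀ m : ℝ, Real.sin ((m + 2) * θ) = 2 * Real.cos θ * Real.sin ((m + 1) * θ)
      - Real.sin (m * θ) := by
    intro m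
    have e1 : (m + 2) * θ = (m + 1) * θ + θ := by ring
    have e2 : m * θ = (m + 1) * θ - θ := by ring
    rw [e1, e2, Real.sin_add, Real.sin_sub]; ring
  induction n with
  | zero =>
    have h2 : Real.sin (((0:ℕ) + 2 : ℝ) * θ) = 2 * Real.cos θ * Real.sin θ := by
      rw [show (((0:ℕ):ℝ) + 2) * θ = θ + θ by push_cast; ring, Real.sin_add]; ring
    rw [pow_one]
    ext i j
    fin_cases i <;> fin_cases j <;>
      simp only [h2, Matrix.cons_val', Matrix.cons_val_zero, Matrix.cons_val_one,
        Matrix.head_cons, Matrix.empty_val', Matrix.cons_val_fin_one, Matrix.of_apply,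
        Nat.cast_zero, zero_mul, Real.sin_zero, neg_zero, zero_div, zero_add, one_mul,
        Fin.zero_eta, Fin.mk_one, Real.sin_two_mul] <;>
      field_simp [Real.sin_two_mul] <;> ring
  | succ n ih =>
    rw [pow_succ, ih, Matrix.mul_fin_two]
    have e1 : ((n + 1 : ℕ) : ℝ) * θ = ((n:ℝ) + 1) * θ := by push_cast; ring
    have e2 : Real.sin ((((n + 1 : ℕ) : ℝ) + 1) * θ)
        = 2 * Real.cos θ * Real.sin (((n:ℝ) + 1) * θ) - Real.sin ((n:ℝ) * θ) := by
      rw [show (((n + 1 : ℕ) : ℝ) + 1) * θ = ((n:ℝ) + 2) * θ by push_cast; ring]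
      exact key n
    have e3 : Real.sin ((((n + 1 : ℕ) : ℝ) + 2) * θ)
        = 2 * Real.cos θ * Real.sin (((n:ℝ) + 2) * θ) - Real.sin (((n:ℝ) + 1) * θ) := by
      have h := key ((n:ℝ) + 1)
      rw [show ((n:ℝ) + 1 + 2) * θ = (((n + 1 : ℕ) : ℝ) + 2) * θ by push_cast; ring,
        show ((n:ℝ) + 1 + 1) * θ = ((n:ℝ) + 2) * θ by ring] at h
      exact h
    rw [e1, e2, e3, key (n:ℝ)]
    ext i j
    fin_cases i <;> fin_cases j <;>
      simp only [Matrix.cons_val', Matrix.cons_val_zero, Matrix.cons_val_one,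
        Matrix.head_cons, Matrix.empty_val', Matrix.cons_val_fin_one, Matrix.of_apply] <;>
      field_simp <;> ring

/-- In SL(2,ℝ) one has (S·T)^q = −I₂ (so (ST)^q is the identity in
PSL(2,ℝ)), and for every integer k with 1 ≤ k < q one has (S·T)^k ≠ I₂ and
(S·T)^k ≠ −I₂; hence the image of S·T in PSL(2,ℝ) has exact order q. -/
theorem ST_order_q (q : ℕ) (hq : 3 ≤ q) (lam : ℝ)
    (hlam : lam = 2 * Real.cos (Real.pi / q))
    (S T : Matrix (Fin 2) (Fin 2) ℝ)
    (hS : S = !![0, -1; 1, 0]) (hT : T = !![1, lam; 0, 1]) :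
    (S * T) ^ q = -1 ∧
      ∀ k : ℕ, 1 ≤ k → k < q → (S * T) ^ k ≠ 1 ∧ (S * T) ^ k ≠ -1 := by
  have hST : S * T = !![0, -1; 1, 2 * Real.cos (Real.pi / q)] := by
    subst hS hT hlam
    rw [Matrix.mul_fin_two]
    norm_num
  have hq0 : (0:ℝ) < q := by positivity
  have hθpos : 0 < Real.pi / q := div_pos Real.pi_pos hq0
  have hθlt : Real.pi / q < Real.pi := by
    rw [div_lt_iff₀ hq0]
    nlinarith [Real.pi_pos, (show (3:ℝ) ≤ q by exact_mod_cast hq)]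
  have hs : (0:ℝ) < Real.sin (Real.pi / q) := Real.sin_pos_of_pos_of_lt_pi hθpos hθlt
  have hqθ : (q:ℝ) * (Real.pi / q) = Real.pi := by field_simp
  constructor
  · obtain ⟨m, hm⟩ : ∃ m, q = m + 1 := ⟨q - 1, by omega⟩
    rw [hST, show (!![0, -1; 1, 2 * Real.cos (Real.pi / q)] : Matrix (Fin 2) (Fin 2) ℝ) ^ q
        = (!![0, -1; 1, 2 * Real.cos (Real.pi / q)]) ^ (m + 1) by rw [hm],
      pow_formula _ (ne_of_gt hs) m]
    have hmq : ((m:ℝ)) = (q:ℝ) - 1 := by rw [hm]; push_cast; ring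
    have e1 : ((m:ℝ)) * (Real.pi / q) = Real.pi - Real.pi / q := by
      rw [hmq]; nlinarith [hqθ]
    have e2 : ((m:ℝ) + 1) * (Real.pi / q) = Real.pi := by
      rw [hmq]; nlinarith [hqθ]
    have e3 : ((m:ℝ) + 2) * (Real.pi / q) = Real.pi + Real.pi / q := by
      rw [hmq]; nlinarith [hqθ]
    rw [e1, e2, e3, Real.sin_pi_sub, Real.sin_pi, Real.sin_add, Real.sin_pi, Real.cos_pi]
    ext i j
    fin_cases i <;> fin_cases j <;>
      simp [Matrix.one_fin_two] <;> field_simp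
  · intro k hk1 hkq
    obtain ⟨m, hm⟩ : ∃ m, k = m + 1 := ⟨k - 1, by omega⟩
    have hksin : 0 < Real.sin ((k:ℝ) * (Real.pi / q)) := by
      apply Real.sin_pos_of_pos_of_lt_pi
      · positivity
      · calc (k:ℝ) * (Real.pi / q) < (q:ℝ) * (Real.pi / q) :=
              mul_lt_mul_of_pos_right (Nat.cast_lt.mpr hkq) hθpos
          _ = Real.pi := hqθ
    have hentry : ((S * T) ^ k) 1 0
        = Real.sin ((k:ℝ) * (Real.pi / q)) / Real.sin (Real.pi / q) := by
      rw [hST, show (!![0, -1; 1, 2 * Real.cos (Real.pi / q)] : Matrix (Fin 2) (Fin 2) ℝ) ^ k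
          = (!![0, -1; 1, 2 * Real.cos (Real.pi / q)]) ^ (m + 1) by rw [hm],
        pow_formula _ (ne_of_gt hs) m]
      have : ((m:ℝ) + 1) = (k:ℝ) := by rw [hm]; push_cast; ring
      simp [this]
    have hne : ((S * T) ^ k) 1 0 ≠ 0 := by
      rw [hentry]; positivity
    constructor
    · intro h
      rw [h] at hne
      simp [Matrix.one_apply] at hne
    · intro h
      rw [h] at hne
      simp [Matrix.one_apply] at hne
end

section
/- Let q ≥ 4 be even and h = (q−2)/2. Then the Möbius transformation (S·T)^h maps 0 to −λ/2; equivalently, the point −λ/2 has the finite regular λ-fraction [1^h]. -/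
open Matrix Real

/-- The Möbius action of a real 2×2 matrix on ℝ. -/
noncomputable def moeb (A : Matrix (Fin 2) (Fin 2) ℝ) (x : ℝ) : ℝ :=
  (A 0 0 * x + A 0 1) / (A 1 0 * x + A 1 1)

lemma pow_ST (θ : ℝ) (hθ : Real.sin θ ≠ 0) (n : ℕ) :
    (!![0, -1; 1, 2 * Real.cos θ] : Matrix (Fin 2) (Fin 2) ℝ) ^ n =
      !![-Real.sin ((n - 1) * θ) / Real.sin θ, -Real.sin (n * θ) / Real.sin θ;
         Real.sin (n * θ) / Real.sin θ, Real.sin ((n + 1) * θ) / Real.sin θ] := by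
  induction n with
  | zero =>
    ext i j
    fin_cases i <;> fin_cases j <;>
      simp [Real.sin_neg, neg_div, div_self hθ, one_mul]
  | succ n ih =>
    rw [pow_succ, ih, Matrix.mul_fin_two]
    ext i j
    fin_cases i <;> fin_cases j <;>
      · push_cast
        simp only [Matrix.of_apply, Matrix.cons_val', Matrix.cons_val_zero, Matrix.cons_val_one,
          Matrix.head_cons, Matrix.empty_val', Matrix.cons_val_fin_one]
        try field_simp
        try simp only [show ((n:ℝ) + 1 + 1) * θ = ((n:ℝ) * θ + θ) + θ by ring,
            show ((n:ℝ) + 1 - 1) * θ = (n:ℝ) * θ by ring,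
            show ((n:ℝ) + 1) * θ = (n:ℝ) * θ + θ by ring,
            show ((n:ℝ) - 1) * θ = (n:ℝ) * θ - θ by ring,
            Real.sin_add, Real.sin_sub, Real.cos_add]
        try ring
        try linear_combination Real.sin ((n:ℝ) * θ) * Real.sin θ ^ 2 * Real.sin_sq_add_cos_sq θ
        try simp only [show θ * 2 = θ + θ by ring, Real.sin_add, Real.cos_add]
        try ring
        try linear_combination Real.sin ((n:ℝ) * θ) * Real.sin_sq_add_cos_sq θ

/-- Let q ≥ 4 be even and h = (q−2)/2. Then the Möbius transformation
(S·T)^h maps 0 to −λ/2; equivalently, −λ/2 has the finite regular λ-fraction [1^h]. -/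
theorem neg_half_lambda_expansion_even (q : ℕ) (hq : 4 ≤ q) (hqe : Even q)
    (lam : ℝ) (hlam : lam = 2 * Real.cos (Real.pi / q))
    (S T : Matrix (Fin 2) (Fin 2) ℝ)
    (hS : S = !![0, -1; 1, 0]) (hT : T = !![1, lam; 0, 1])
    (h : ℕ) (hh : h = (q - 2) / 2) :
    moeb ((S * T) ^ h) 0 = -(lam / 2) := by
  set θ := Real.pi / q with hθdef
  have hq0 : (0:ℝ) < q := by positivity
  have hθpos : 0 < θ := by positivity
  have hθlt : θ < Real.pi := by
    rw [hθdef, div_lt_iff₀ hq0]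
    have h1q : (1:ℝ) < q := by exact_mod_cast (by omega : 1 < q)
    exact lt_mul_of_one_lt_right Real.pi_pos h1q
  have hs : Real.sin θ ≠ 0 := ne_of_gt (Real.sin_pos_of_pos_of_lt_pi hθpos hθlt)
  have hST : S * T = !![0, -1; 1, 2 * Real.cos θ] := by
    subst hS hT hlam
    rw [Matrix.mul_fin_two]
    norm_num
  have h1 : ((h:ℝ) + 1) * θ = Real.pi / 2 := by
    have h2 : 2 * h + 2 = q := by
      obtain ⟨k, hk⟩ := hqe
      omega
    have : ((2:ℝ) * h + 2) = q := by exact_mod_cast h2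
    rw [hθdef]
    field_simp
    linear_combination this
  have h0 : (h:ℝ) * θ = Real.pi / 2 - θ := by linarith [h1]
  rw [hST, pow_ST θ hs h]
  simp only [moeb, Matrix.cons_val', Matrix.cons_val_zero, Matrix.cons_val_one, Matrix.head_cons,
    Matrix.empty_val', Matrix.cons_val_fin_one, Matrix.head_fin_const, mul_zero, zero_add]
  rw [h0, h1, Real.sin_pi_div_two, Real.sin_pi_div_two_sub, hlam]
  simp only [Matrix.of_apply, Matrix.cons_val', Matrix.cons_val_zero, Matrix.cons_val_one,
    Matrix.head_cons, Matrix.empty_val', Matrix.cons_val_fin_one, Matrix.head_fin_const]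
  field_simp
end

section
/- Let q ≥ 3 be odd and h = (q−3)/2. Then the Möbius transformation (S·T)^h · (S·T²) · (S·T)^h maps 0 to −λ/2; equivalently, the point −λ/2 has the finite regular λ-fraction [1^h, 2, 1^h]. -/
open Matrix Real

lemma pow_ST_s3 (lam : ℝ) (u : ℕ → ℝ) (hu0 : u 0 = 0) (hu1 : u 1 = 1)
    (hrec : ∀ n, u (n+2) = lam * u (n+1) - u n) (n : ℕ) :
    (!![0, -1; 1, lam] : Matrix (Fin 2) (Fin 2) ℝ) ^ n
      = !![u (n+1) - lam * u n, -(u n); u n, u (n+1)] := by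
  induction n with
  | zero => rw [pow_zero, hu0, hu1, Matrix.one_fin_two]; norm_num
  | succ n ih =>
    rw [pow_succ, ih, Matrix.mul_fin_two, hrec n]
    congr 1; ring_nf

/-- Let q ≥ 3 be odd and h = (q−3)/2. Then the Möbius transformation
(S·T)^h · (S·T²) · (S·T)^h maps 0 to −λ/2; equivalently, −λ/2 has the finite
regular λ-fraction [1^h, 2, 1^h]. -/
theorem neg_half_lambda_expansion_odd (q : ℕ) (hq : 3 ≤ q) (hqo : Odd q)
    (lam : ℝ) (hlam : lam = 2 * Real.cos (Real.pi / q))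
    (S T : Matrix (Fin 2) (Fin 2) ℝ)
    (hS : S = !![0, -1; 1, 0]) (hT : T = !![1, lam; 0, 1])
    (h : ℕ) (hh : h = (q - 3) / 2) :
    moeb ((S * T) ^ h * (S * T ^ 2) * (S * T) ^ h) 0 = -(lam / 2) := by
  obtain ⟨k, hk⟩ := hqo
  have hq3 : q = 2 * h + 3 := by omega
  set θ := Real.pi / q with hθ
  have hθpos : 0 < θ := by positivity
  have hθlt : θ < Real.pi / 2 := by
    rw [hθ]
    apply div_lt_div_of_pos_left Real.pi_pos two_pos
    exact_mod_cast by omega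
  have hspos : 0 < Real.sin θ := Real.sin_pos_of_pos_of_lt_pi hθpos
    (hθlt.trans (by linarith [Real.pi_pos]))
  have hs : Real.sin θ ≠ 0 := ne_of_gt hspos
  -- the sequence u
  set u : ℕ → ℝ := fun n => Real.sin (n * θ) / Real.sin θ with hu
  have hu0 : u 0 = 0 := by simp [hu]
  have hu1 : u 1 = 1 := by simp [hu, div_self hs]
  have hrec : ∀ n : ℕ, u (n+2) = lam * u (n+1) - u n := by
    intro n
    have : Real.sin ((n+2) * θ) = 2 * Real.cos θ * Real.sin ((n+1) * θ) - Real.sin (n * θ) := by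
      have h1 : ((n:ℝ)+2) * θ = (n+1) * θ + θ := by ring
      have h2 : (n:ℝ) * θ = (n+1) * θ - θ := by ring
      rw [h1, h2, Real.sin_add, Real.sin_sub]
      ring
    simp only [hu]
    push_cast
    rw [this, hlam]
    ring
  have hST : S * T = !![0, -1; 1, lam] := by
    rw [hS, hT, Matrix.mul_fin_two]; norm_num
  have hST2 : S * T ^ 2 = !![0, -1; 1, 2 * lam] := by
    rw [hS, hT, pow_two, Matrix.mul_fin_two, Matrix.mul_fin_two]
    norm_num
    congr 1; ring_nf
  rw [hST, hST2, pow_ST_s3 lam u hu0 hu1 hrec, Matrix.mul_fin_two, Matrix.mul_fin_two]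
  -- trig values
  have hqθ : (2 * (h:ℝ) + 3) * θ = Real.pi := by
    rw [hθ]
    have : (q:ℝ) = 2 * h + 3 := by exact_mod_cast congrArg Nat.cast hq3
    rw [this]
    field_simp
  have ha : u (h+1) = Real.cos (θ/2) / Real.sin θ := by
    simp only [hu]
    push_cast
    rw [show ((h:ℝ)+1) * θ = Real.pi/2 - θ/2 by linarith, Real.sin_pi_div_two_sub]
  have hb : u h = Real.cos (3 * (θ/2)) / Real.sin θ := by
    simp only [hu]
    rw [show (h:ℝ) * θ = Real.pi/2 - 3 * (θ/2) by linarith, Real.sin_pi_div_two_sub]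
  rw [ha, hb]
  unfold moeb
  norm_num
  set A := Real.cos (θ/2) with hA
  set B := Real.cos (3 * (θ/2)) with hB
  set s := Real.sin θ with hsin
  have hAB : lam * A = A + B := by
    have h3 : Real.cos (θ/2) = Real.cos θ * Real.cos (θ/2) + Real.sin θ * Real.sin (θ/2) := by
      conv_lhs => rw [show θ/2 = θ - θ/2 by ring]
      exact Real.cos_sub θ (θ/2)
    rw [hlam, hA, hB, show 3 * (θ/2) = θ + θ/2 by ring, Real.cos_add]
    linear_combination -h3
  have hApos : 0 < A := by
    rw [hA]
    apply Real.cos_pos_of_mem_Ioo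
    constructor <;> [linarith [Real.pi_pos]; linarith]
  have hden : -(A / s * (B / s)) + (-(B / s) + A / s * (2 * lam)) * (A / s) = 2 * A^2 / s^2 := by
    field_simp
    linear_combination 2 * hAB
  rw [hden, div_eq_iff (by positivity)]
  field_simp
  linear_combination (A - B) * hAB
end

section
/- Let q ≥ 3 be odd and h = (q−3)/2. Then the Möbius transformation T · (S·T)^h maps 0 to 1; equivalently, the point 1 has the finite regular λ-fraction [1; 1^h]. -/
open Matrix Real

/-- Let q ≥ 3 be odd and h = (q−3)/2. Then the Möbius transformation
T · (S·T)^h maps 0 to 1; equivalently, 1 has the finite regular λ-fraction [1; 1^h]. -/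
theorem one_expansion_odd (q : ℕ) (hq : 3 ≤ q) (hqo : Odd q)
    (lam : ℝ) (hlam : lam = 2 * Real.cos (Real.pi / q))
    (S T : Matrix (Fin 2) (Fin 2) ℝ)
    (hS : S = !![0, -1; 1, 0]) (hT : T = !![1, lam; 0, 1])
    (h : ℕ) (hh : h = (q - 3) / 2) :
    moeb (T * (S * T) ^ h) 0 = 1 := by
  have hq0 : 0 < q := by omega
  have hqR : (0:ℝ) < q := by exact_mod_cast hq0
  set θ := Real.pi / q with hθdef
  have hθpos : 0 < θ := div_pos Real.pi_pos hqR
  have hθlt : θ < Real.pi := by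
    rw [hθdef, div_lt_iff₀ hqR]
    nlinarith [Real.pi_pos, (show (3:ℝ) ≤ q by exact_mod_cast hq)]
  have hsin : Real.sin θ ≠ 0 := ne_of_gt (Real.sin_pos_of_pos_of_lt_pi hθpos hθlt)
  set f : ℕ → ℝ := fun n => Real.sin (n * θ) / Real.sin θ with hf
  have hrec : ∀ n : ℕ, f (n+2) = lam * f (n+1) - f n := by
    intro n
    simp only [hf, hlam, ← hθdef]
    push_cast
    have h1 : ((n:ℝ)+2)*θ = ((n:ℝ)+1)*θ + θ := by ring
    have h2 : (n:ℝ)*θ = ((n:ℝ)+1)*θ - θ := by ring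
    rw [h1, h2, Real.sin_add, Real.sin_sub]
    field_simp
    ring
  have hf0 : f 0 = 0 := by simp [hf]
  have hf1 : f 1 = 1 := by simp [hf, div_self hsin]
  have hf2 : f 2 = lam := by
    simp only [hf, hlam, ← hθdef]
    push_cast
    rw [two_mul, Real.sin_add]
    field_simp
    ring
  have key : ∀ n : ℕ, T * (S*T)^n = !![f (n+1), f (n+2); f n, f (n+1)] := by
    intro n
    induction n with
    | zero =>
      rw [pow_zero, mul_one, hT]
      norm_num [hf0, hf1, hf2]
    | succ n ih =>
      rw [pow_succ, ← mul_assoc, ih, hS, hT]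
      have hst : (!![(0:ℝ),-1;1,0] * !![1,lam;0,1]) = !![0,-1;1,lam] := by
        rw [Matrix.mul_fin_two]; norm_num
      rw [hst, Matrix.mul_fin_two,
        show n+1+1 = n+2 from rfl, show n+1+2 = n+3 from rfl, hrec (n+1), hrec n]
      ext i j
      fin_cases i <;> fin_cases j <;>
        simp [Matrix.cons_val_zero, Matrix.cons_val_one, Matrix.head_cons] <;> ring
  rw [key h]
  obtain ⟨k, hk⟩ := hqo
  have hq' : q = 2*h+3 := by omega
  have hsum : ((h:ℝ)+2)*θ = Real.pi - ((h:ℝ)+1)*θ := by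
    have hqRe : (q:ℝ) = 2*(h:ℝ)+3 := by exact_mod_cast congrArg (Nat.cast : ℕ → ℝ) hq'
    rw [hθdef]
    field_simp
    rw [hqRe]; ring
  have heq : Real.sin (((h:ℝ)+2)*θ) = Real.sin (((h:ℝ)+1)*θ) := by
    rw [hsum, Real.sin_pi_sub]
  have hlt : ((h:ℝ)+1)*θ < Real.pi := by
    rw [hθdef]
    have : ((h:ℝ)+1) < q := by
      have : (h:ℝ) + 1 < 2*(h:ℝ)+3 := by linarith [show (0:ℝ) ≤ (h:ℝ) from Nat.cast_nonneg h]
      rw [show (q:ℝ) = 2*(h:ℝ)+3 by exact_mod_cast congrArg (Nat.cast : ℕ → ℝ) hq']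
      exact this
    calc ((h:ℝ)+1) * (Real.pi / q) < (q:ℝ) * (Real.pi / q) := by
          apply mul_lt_mul_of_pos_right this (div_pos Real.pi_pos hqR)
      _ = Real.pi := by field_simp
  have hpos : 0 < Real.sin (((h:ℝ)+1)*θ) :=
    Real.sin_pos_of_pos_of_lt_pi (by positivity) hlt
  simp only [moeb, Matrix.of_apply, Matrix.cons_val', Matrix.cons_val_zero, Matrix.cons_val_one,
    Matrix.head_cons, Matrix.head_fin_const, Matrix.empty_val', Matrix.cons_val_fin_one]
  simp only [hf]
  push_cast
  rw [heq]
  field_simp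
  rw [zero_add, mul_one, zero_mul, zero_add, div_self hpos.ne']
end

section
/- Let q ≥ 3 be odd, h = (q−3)/2, and let R be the unique positive root of x² + (2−λ)x − 1 = 0. Then λ/2 < R < 1 and the Möbius transformation (T·S)^{h+1} maps R to −R. -/
open Matrix Real

lemma tri (θ : ℝ) (x : ℝ) :
    Real.sin (x + 2 * θ) = 2 * Real.cos θ * Real.sin (x + θ) - Real.sin x := by
  have h1 : x + 2 * θ = (x + θ) + θ := by ring
  rw [h1, Real.sin_add]
  conv_rhs => rw [show x = (x + θ) - θ by ring]
  rw [Real.sin_sub]; ring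

lemma pow_TS (θ : ℝ) (hs : Real.sin θ ≠ 0) (n : ℕ) :
    (!![2 * Real.cos θ, -1; 1, 0] : Matrix (Fin 2) (Fin 2) ℝ) ^ (n + 1) =
      (Real.sin θ)⁻¹ •
        !![Real.sin ((n + 2) * θ), -Real.sin ((n + 1) * θ);
           Real.sin ((n + 1) * θ), -Real.sin (n * θ)] := by
  induction n with
  | zero =>
    ext i j
    fin_cases i <;> fin_cases j <;>
      simp [Matrix.smul_apply] <;> push_cast <;>
      field_simp [Real.sin_two_mul] <;> ring_nf <;>
      rw [mul_comm θ 2, Real.sin_two_mul] <;> ring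
  | succ n ih =>
    rw [pow_succ, ih, Matrix.smul_mul]
    congr 1
    ext i j
    fin_cases i <;> fin_cases j <;>
      simp [Matrix.mul_apply, Fin.sum_univ_two] <;> push_cast
    · rw [show ((n : ℝ) + 1 + 2) * θ = ((n : ℝ) + 1) * θ + 2 * θ by ring, tri θ,
        show ((n : ℝ) + 1) * θ + θ = ((n : ℝ) + 2) * θ by ring]
      ring
    · ring_nf
    · rw [show ((n : ℝ) + 1 + 1) * θ = (n : ℝ) * θ + 2 * θ by ring, tri θ,
        show (n : ℝ) * θ + θ = ((n : ℝ) + 1) * θ by ring]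
      ring

/-- Let q ≥ 3 be odd, h = (q−3)/2, and let R be the unique positive
root of x² + (2−λ)x − 1 = 0. Then λ/2 < R < 1 and the Möbius transformation
(T·S)^{h+1} maps R to −R. -/
theorem R_properties_odd (q : ℕ) (hq : 3 ≤ q) (hqo : Odd q)
    (lam : ℝ) (hlam : lam = 2 * Real.cos (Real.pi / q))
    (R : ℝ) (hR : R = ((lam - 2) + Real.sqrt ((2 - lam) ^ 2 + 4)) / 2)
    (S T : Matrix (Fin 2) (Fin 2) ℝ)
    (hS : S = !![0, -1; 1, 0]) (hT : T = !![1, lam; 0, 1])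
    (h : ℕ) (hh : h = (q - 3) / 2) :
    lam / 2 < R ∧ R < 1 ∧ moeb ((T * S) ^ (h + 1)) R = -R := by
  obtain ⟨m, hm⟩ := hqo
  have hq2h : q = 2 * h + 3 := by omega
  set θ : ℝ := Real.pi / q with hθ
  have hqR : (q : ℝ) = 2 * h + 3 := by rw [hq2h]; push_cast; ring
  have hqpos : (0 : ℝ) < q := by positivity
  have hθpos : 0 < θ := by positivity
  have hθlt : θ < Real.pi := by
    rw [hθ, div_lt_iff₀ hqpos]
    nlinarith [Real.pi_pos, hqR, (by positivity : (0:ℝ) < (h:ℝ) + 1)]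
  have hsin : 0 < Real.sin θ := Real.sin_pos_of_pos_of_lt_pi hθpos hθlt
  have hθle3 : θ ≤ Real.pi / 3 := by
    rw [hθ]
    apply div_le_div_of_nonneg_left Real.pi_pos.le (by norm_num)
    exact_mod_cast hq
  have hcos : (1 : ℝ) / 2 ≤ Real.cos θ := by
    have := Real.cos_le_cos_of_nonneg_of_le_pi hθpos.le
      (by linarith [Real.pi_pos] : Real.pi / 3 ≤ Real.pi) hθle3
    rwa [Real.cos_pi_div_three] at this
  have hlam1 : 1 ≤ lam := by rw [hlam]; linarith
  have hcos1 : Real.cos θ < 1 := by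
    have := Real.cos_lt_cos_of_nonneg_of_le_pi (le_refl 0) hθlt.le hθpos
    rwa [Real.cos_zero] at this
  have hlam2 : lam < 2 := by rw [hlam]; linarith
  -- the sqrt
  set s : ℝ := Real.sqrt ((2 - lam) ^ 2 + 4) with hsdef
  have hs2 : s ^ 2 = (2 - lam) ^ 2 + 4 := Real.sq_sqrt (by positivity)
  have hsnn : 0 ≤ s := Real.sqrt_nonneg _
  have Req : R ^ 2 + (2 - lam) * R - 1 = 0 := by
    rw [hR]; linear_combination (1/4) * hs2
  have hs_gt2 : 2 < s := by
    nlinarith [hs2, hsnn, sq_nonneg (2 - lam)]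
  have hs_gtlam : lam < s := by nlinarith [hs2, hsnn]
  have h1 : lam / 2 < R := by rw [hR]; linarith
  have hRlt1 : R < 1 := by
    rw [hR]
    have : s < 4 - lam := by nlinarith [hs2, hsnn]
    linarith
  have hRgt : lam - 1 < R := by linarith
  refine ⟨h1, hRlt1, ?_⟩
  -- matrix part
  have hTS : T * S = !![2 * Real.cos θ, -1; 1, 0] := by
    rw [hT, hS, hlam]
    ext i j
    fin_cases i <;> fin_cases j <;>
      simp [Matrix.mul_apply, Fin.sum_univ_two]
  rw [hTS, pow_TS θ (ne_of_gt hsin) h]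
  -- angle identities
  have hpi : ((h : ℝ) + 2) * θ = Real.pi - ((h : ℝ) + 1) * θ := by
    rw [hθ, hqR]
    field_simp
    ring
  have A2 : Real.sin (((h : ℝ) + 2) * θ) = Real.sin (((h : ℝ) + 1) * θ) := by
    rw [hpi, Real.sin_pi_sub]
  have hangpos : 0 < ((h : ℝ) + 1) * θ := by positivity
  have hanglt : ((h : ℝ) + 1) * θ < Real.pi := by
    rw [hθ, hqR]
    have hp : 0 < Real.pi / (2 * (h : ℝ) + 3) := by positivity
    calc ((h : ℝ) + 1) * (Real.pi / (2 * h + 3))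
        < (2 * (h : ℝ) + 3) * (Real.pi / (2 * h + 3)) := by
          apply mul_lt_mul_of_pos_right _ hp; linarith
      _ = Real.pi := by field_simp
  have Cpos : 0 < Real.sin (((h : ℝ) + 1) * θ) :=
    Real.sin_pos_of_pos_of_lt_pi hangpos hanglt
  have sinh : Real.sin ((h : ℝ) * θ) = (lam - 1) * Real.sin (((h : ℝ) + 1) * θ) := by
    have t := tri θ ((h : ℝ) * θ)
    rw [show (h : ℝ) * θ + 2 * θ = ((h : ℝ) + 2) * θ by ring,
      show (h : ℝ) * θ + θ = ((h : ℝ) + 1) * θ by ring, A2] at t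
    linear_combination t - Real.sin (((h : ℝ) + 1) * θ) * hlam
  -- compute moeb
  set C := Real.sin (((h : ℝ) + 1) * θ) with hC
  rw [A2, sinh]
  simp only [moeb, Matrix.smul_apply, smul_eq_mul]
  norm_num [Matrix.cons_val_zero, Matrix.cons_val_one, Matrix.head_cons]
  have hden : (Real.sin θ)⁻¹ * C * R + -((Real.sin θ)⁻¹ * ((lam - 1) * C)) =
      (Real.sin θ)⁻¹ * C * (R - lam + 1) := by ring
  have hdenpos : 0 < (Real.sin θ)⁻¹ * C * (R - lam + 1) := by
    apply mul_pos (mul_pos (inv_pos.mpr hsin) Cpos)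
    linarith
  rw [hden, div_eq_iff (ne_of_gt hdenpos)]
  linear_combination ((Real.sin θ)⁻¹ * C) * Req
end

section
/- Let q ≥ 3 be odd, h = (q−3)/2, let R be the unique positive root of x² + (2−λ)x − 1 = 0, and set r = R − λ. Then the Möbius transformation (S·T)^{h+1} · T · (S·T)^h · T fixes r, i.e. ((S·T)^{h+1} T (S·T)^h T)·r = r. -/
open Matrix Real

lemma powST_aux (lam : ℝ) (s : ℕ → ℝ) (hs0 : s 0 = 0) (hs1 : s 1 = 1)
    (hrec : ∀ n, s (n + 2) = lam * s (n + 1) - s n) (n : ℕ) :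
    (!![0, -1; 1, lam] : Matrix (Fin 2) (Fin 2) ℝ) ^ n =
      !![s (n + 1) - lam * s n, -s n; s n, s (n + 1)] := by
  induction n with
  | zero =>
      simp [hs0, hs1, Matrix.one_fin_two]
  | succ n ih =>
      rw [pow_succ, ih]
      ext i j
      fin_cases i <;> fin_cases j <;>
        simp [Matrix.mul_apply, Fin.sum_univ_two, hrec n] <;> ring

set_option maxHeartbeats 1000000 in
/-- Let q ≥ 3 be odd, h = (q−3)/2, R the unique positive root of
x² + (2−λ)x − 1 = 0, and r = R − λ. Then the Möbius transformation
(S·T)^{h+1} · T · (S·T)^h · T fixes r. -/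
theorem r_fixed_odd (q : ℕ) (hq : 3 ≤ q) (hqo : Odd q)
    (lam : ℝ) (hlam : lam = 2 * Real.cos (Real.pi / q))
    (R r : ℝ) (hR : R = ((lam - 2) + Real.sqrt ((2 - lam) ^ 2 + 4)) / 2)
    (hr : r = R - lam)
    (S T : Matrix (Fin 2) (Fin 2) ℝ)
    (hS : S = !![0, -1; 1, 0]) (hT : T = !![1, lam; 0, 1])
    (h : ℕ) (hh : h = (q - 3) / 2) :
    moeb ((S * T) ^ (h + 1) * T * (S * T) ^ h * T) r = r := by
  have hqpos : (0 : ℝ) < (q : ℝ) := by positivity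
  have hq3 : (3 : ℝ) ≤ (q : ℝ) := by exact_mod_cast hq
  -- q = 2*h + 3
  obtain ⟨k, hk⟩ := hqo
  have hk1 : 1 ≤ k := by omega
  have hhk : h = k - 1 := by omega
  have hq2h : q = 2 * h + 3 := by omega
  have hqR : (q : ℝ) = 2 * (h : ℝ) + 3 := by
    rw [hq2h]; push_cast; ring
  set θ : ℝ := Real.pi / q with hθ
  have hθpos : 0 < θ := by positivity
  have hθltpi : θ < Real.pi := by
    rw [hθ]
    rw [div_lt_iff₀ hqpos]
    nlinarith [Real.pi_pos]
  have hsinθ : 0 < Real.sin θ := Real.sin_pos_of_pos_of_lt_pi hθpos hθltpi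
  -- the Chebyshev-like sequence
  set s : ℕ → ℝ := fun n => Real.sin ((n : ℝ) * θ) / Real.sin θ with hsdef
  have hs0 : s 0 = 0 := by simp [hsdef]
  have hs1 : s 1 = 1 := by
    simp only [hsdef, Nat.cast_one, one_mul]
    field_simp
  have hrec : ∀ n : ℕ, s (n + 2) = lam * s (n + 1) - s n := by
    intro n
    have key : Real.sin (((n : ℝ) + 1) * θ + θ) + Real.sin (((n : ℝ) + 1) * θ - θ)
        = 2 * Real.sin (((n : ℝ) + 1) * θ) * Real.cos θ := by
      rw [Real.sin_add, Real.sin_sub]; ring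
    have e2 : ((n + 2 : ℕ) : ℝ) * θ = ((n : ℝ) + 1) * θ + θ := by push_cast; ring
    have e1 : ((n + 1 : ℕ) : ℝ) * θ = ((n : ℝ) + 1) * θ := by push_cast; ring
    have e0 : ((n : ℕ) : ℝ) * θ = ((n : ℝ) + 1) * θ - θ := by ring
    simp only [hsdef, e2, e1, e0]
    rw [hlam]
    field_simp
    have key' := key
    ring_nf at key' ⊢
    linarith [key']
  have hST : S * T = !![0, -1; 1, lam] := by
    rw [hS, hT]
    ext i j
    fin_cases i <;> fin_cases j <;>
      simp [Matrix.mul_apply, Fin.sum_univ_two]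
  have hpow := powST_aux lam s hs0 hs1 hrec
  -- special values of s
  set x : ℝ := Real.pi / (2 * q) with hx
  have hθ2x : θ = 2 * x := by rw [hθ, hx]; field_simp
  set b : ℝ := Real.cos x / Real.sin θ with hb
  have hcosx : 0 < Real.cos x := by
    apply Real.cos_pos_of_mem_Ioo
    constructor
    · have : 0 < x := by rw [hx]; positivity
      linarith
    · rw [hx, div_lt_iff₀ (by positivity)]
      nlinarith [Real.pi_pos]
  have hbpos : 0 < b := div_pos hcosx hsinθ
  have hlamval : lam = 2 * Real.cos (2 * x) := by rw [hlam, ← hθ2x, hθ]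
  -- angles
  have ang1 : ((h : ℝ) + 1) * θ = Real.pi / 2 - x := by
    rw [hθ, hx, hqR]; field_simp; ring
  have ang2 : ((h : ℝ) + 2) * θ = Real.pi / 2 + x := by
    rw [hθ, hx, hqR]; field_simp; ring
  have ang0 : (h : ℝ) * θ = Real.pi / 2 - 3 * x := by
    rw [hθ, hx, hqR]; field_simp; ring
  have hv1 : s (h + 1) = b := by
    simp only [hsdef, hb]
    congr 1
    push_cast
    rw [ang1, Real.sin_pi_div_two_sub]
  have hv2 : s (h + 2) = b := by
    simp only [hsdef, hb]
    congr 1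
    push_cast
    rw [ang2]
    have : Real.pi / 2 + x = Real.pi / 2 - (-x) := by ring
    rw [this, Real.sin_pi_div_two_sub, Real.cos_neg]
  have hcos3x : Real.cos (3 * x) = (lam - 1) * Real.cos x := by
    have e1 := Real.cos_add (2 * x) x
    have e2 := Real.cos_sub (2 * x) x
    have h1 : 2 * x + x = 3 * x := by ring
    have h2 : 2 * x - x = x := by ring
    rw [h1] at e1
    rw [h2] at e2
    rw [hlamval]
    linear_combination e1 + e2
  have hv0 : s h = (lam - 1) * b := by
    simp only [hsdef, hb]
    rw [ang0, Real.sin_pi_div_two_sub, hcos3x]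
    ring
  -- the matrix
  have hM : (S * T) ^ (h + 1) * T * (S * T) ^ h * T =
      !![-2 * (lam - 1) * b ^ 2, lam * (1 - 2 * lam) * b ^ 2;
         lam * b ^ 2, (lam ^ 2 + 2) * b ^ 2] := by
    rw [hST, hpow (h + 1), hpow h, hT]
    have e : h + 1 + 1 = h + 2 := by ring
    rw [e, hv0, hv1, hv2]
    ext i j
    fin_cases i <;> fin_cases j <;>
      simp [Matrix.mul_apply, Fin.sum_univ_two] <;> ring
  rw [hM]
  -- quadratic for r
  have hsq : Real.sqrt ((2 - lam) ^ 2 + 4) ^ 2 = (2 - lam) ^ 2 + 4 :=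
    Real.sq_sqrt (by positivity)
  have hquad : r ^ 2 + (lam + 2) * r + (2 * lam - 1) = 0 := by
    rw [hr, hR]
    linear_combination (1 / 4 : ℝ) * hsq
  -- R > 0 and lam > 0
  have hlamle : lam ≤ 2 := by
    rw [hlam]
    linarith [Real.cos_le_one θ]
  have hsqgt : 2 - lam < Real.sqrt ((2 - lam) ^ 2 + 4) := by
    calc 2 - lam ≤ |2 - lam| := le_abs_self _
      _ = Real.sqrt ((2 - lam) ^ 2) := (Real.sqrt_sq_eq_abs _).symm
      _ < Real.sqrt ((2 - lam) ^ 2 + 4) :=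
          Real.sqrt_lt_sqrt (by positivity) (by linarith)
  have hRpos : 0 < R := by
    rw [hR]
    linarith
  have hlampos : 0 < lam := by
    rw [hlam]
    have : 0 < Real.cos θ := by
      apply Real.cos_pos_of_mem_Ioo
      constructor
      · linarith
      · rw [hθ, div_lt_iff₀ hqpos]
        nlinarith [Real.pi_pos]
    linarith
  -- denominator
  have hD : lam * b ^ 2 * r + (lam ^ 2 + 2) * b ^ 2 = b ^ 2 * (lam * R + 2) := by
    rw [hr]; ring
  have hDpos : lam * b ^ 2 * r + (lam ^ 2 + 2) * b ^ 2 ≠ 0 := by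
    rw [hD]
    positivity
  simp only [moeb]
  norm_num
  rw [div_eq_iff hDpos]
  linear_combination (-(lam * b ^ 2)) * hquad
end

section
/- One has ⟨y⟩* = 0 if and only if y ∈ [−R, R]; moreover x − ⟨x⟩*·λ ∈ (r, R] for every x ≥ R and x − ⟨x⟩*·λ ∈ [−R, −r) for every x ≤ −R. Consequently the dual nearest λ-multiple map F_q* maps [−R, 0) into [r, R] and maps (0, R] into [−R, −r]. -/
open Real

/-- The modified floor function: ⌊x⌋ = n iff n < x ≤ n+1 when x > 0,
and ⌊x⌋ = n iff n ≤ x < n+1 when x ≤ 0. -/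
noncomputable def mfloor (x : ℝ) : ℤ := if 0 < x then ⌈x⌉ - 1 else ⌊x⌋

lemma mfloor_eq_zero_iff (x : ℝ) : mfloor x = 0 ↔ 0 ≤ x ∧ x ≤ 1 := by
  unfold mfloor
  split_ifs with h
  · constructor
    · intro hc
      have hc1 : ⌈x⌉ = 1 := by omega
      have := Int.ceil_le.mp hc1.le
      exact ⟨h.le, by exact_mod_cast this⟩
    · rintro ⟨_, h1⟩
      have h2 : ⌈x⌉ ≤ 1 := Int.ceil_le.mpr (by exact_mod_cast h1)
      have h3 : 0 < ⌈x⌉ := Int.ceil_pos.mpr h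
      omega
  · push_neg at h
    constructor
    · intro h0
      have := Int.floor_le x
      rw [h0] at this
      norm_num at this
      exact ⟨this, by linarith⟩
    · rintro ⟨h0, _⟩
      have hx0 : x = 0 := le_antisymm h h0
      simp [hx0]

/-- ⟨y⟩* = 0 iff y ∈ [−R, R]; moreover x − ⟨x⟩*·λ ∈ (r, R] for every
x ≥ R and x − ⟨x⟩*·λ ∈ [−R, −r) for every x ≤ −R. Consequently F_q* maps [−R, 0)
into [r, R] and (0, R] into [−R, −r]. -/
theorem dual_map_properties (q : ℕ) (hq : 3 ≤ q)
    (lam : ℝ) (hlam : lam = 2 * Real.cos (Real.pi / q))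
    (R r : ℝ)
    (hR : R = if Even q then 1 else ((lam - 2) + Real.sqrt ((2 - lam) ^ 2 + 4)) / 2)
    (hr : r = R - lam)
    (nlms : ℝ → ℤ)
    (hnlms : ∀ y : ℝ, nlms y =
      if y ≤ 0 then mfloor (y / lam + R / lam) else mfloor (y / lam - r / lam))
    (F : ℝ → ℝ)
    (hF : ∀ y : ℝ, F y = if y = 0 then 0 else -1 / y - (nlms (-1 / y) : ℝ) * lam) :
    (∀ y : ℝ, nlms y = 0 ↔ y ∈ Set.Icc (-R) R) ∧
      (∀ x : ℝ, R ≤ x → x - (nlms x : ℝ) * lam ∈ Set.Ioc r R) ∧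
      (∀ x : ℝ, x ≤ -R → x - (nlms x : ℝ) * lam ∈ Set.Ico (-R) (-r)) ∧
      (∀ y ∈ Set.Ico (-R) (0 : ℝ), F y ∈ Set.Icc r R) ∧
      (∀ y ∈ Set.Ioc (0 : ℝ) R, F y ∈ Set.Icc (-R) (-r)) := by
  -- basic bounds on lam
  have hqR : (3 : ℝ) ≤ (q : ℝ) := by exact_mod_cast hq
  have hq0 : (0 : ℝ) < (q : ℝ) := by linarith
  have hx0 : 0 < π / q := div_pos Real.pi_pos hq0
  have hxpi3 : π / q ≤ π / 3 :=
    div_le_div_of_nonneg_left Real.pi_pos.le (by norm_num) hqR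
  have hcos13 : (1 : ℝ) / 2 ≤ Real.cos (π / q) := by
    have := Real.cos_le_cos_of_nonneg_of_le_pi hx0.le
      (by linarith [Real.pi_pos] : π / 3 ≤ π) hxpi3
    rw [Real.cos_pi_div_three] at this
    exact this
  have hlam1 : 1 ≤ lam := by rw [hlam]; linarith
  have hlam0 : 0 < lam := by linarith
  have hlam0' : lam ≠ 0 := ne_of_gt hlam0
  have hlam2 : lam ≤ 2 := by
    rw [hlam]; linarith [Real.cos_le_one (π / q)]
  -- bounds on R
  have hRfacts : 0 < R ∧ R ≤ 1 ∧ R < lam := by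
    by_cases hev : Even q
    · rw [hR, if_pos hev]
      refine ⟨one_pos, le_refl 1, ?_⟩
      have hq4 : 4 ≤ q := by
        rcases hev with ⟨k, hk⟩; omega
      have hq4R : (4 : ℝ) ≤ (q : ℝ) := by exact_mod_cast hq4
      have hxpi4 : π / q ≤ π / 4 :=
        div_le_div_of_nonneg_left Real.pi_pos.le (by norm_num) hq4R
      have hcos : Real.sqrt 2 / 2 ≤ Real.cos (π / q) := by
        have := Real.cos_le_cos_of_nonneg_of_le_pi hx0.le
          (by linarith [Real.pi_pos] : π / 4 ≤ π) hxpi4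
        rw [Real.cos_pi_div_four] at this
        exact this
      have h2 : (1 : ℝ) < Real.sqrt 2 := by
        rw [show (1:ℝ) = Real.sqrt 1 from (Real.sqrt_one).symm]
        exact Real.sqrt_lt_sqrt (by norm_num) (by norm_num)
      rw [hlam]; linarith
    · rw [hR, if_neg hev]
      set s := Real.sqrt ((2 - lam) ^ 2 + 4) with hs
      have hs0 : 0 ≤ s := Real.sqrt_nonneg _
      have hs2 : s ^ 2 = (2 - lam) ^ 2 + 4 := Real.sq_sqrt (by positivity)
      refine ⟨?_, ?_, ?_⟩
      · nlinarith
      · nlinarith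
      · nlinarith
  obtain ⟨hR0, hR1, hRlam⟩ := hRfacts
  have hr0 : r < 0 := by rw [hr]; linarith
  -- key lemma for positive arguments
  have keyA : ∀ x : ℝ, 0 < x → x - (nlms x : ℝ) * lam ∈ Set.Ioc r R := by
    intro x hx
    rw [hnlms, if_neg (not_le.mpr hx)]
    set t := x / lam - r / lam with ht
    have ht2 : t = (x - r) / lam := by rw [ht]; ring
    have ht' : t * lam = x - r := by rw [ht2]; field_simp
    have htpos : 0 < t := by
      rw [ht2]; exact div_pos (by linarith) hlam0
    have hm : mfloor t = ⌈t⌉ - 1 := by simp [mfloor, htpos]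
    have h1 : t ≤ (⌈t⌉ : ℝ) := Int.le_ceil t
    have h2 : (⌈t⌉ : ℝ) < t + 1 := Int.ceil_lt_add_one t
    rw [hm]
    push_cast
    have e1 : ((⌈t⌉ : ℝ) - 1) * lam = (⌈t⌉ : ℝ) * lam - lam := by ring
    have p1 := mul_lt_mul_of_pos_right h2 hlam0
    have p1' : (t + 1) * lam = t * lam + lam := by ring
    have p2 := mul_le_mul_of_nonneg_right h1 hlam0.le
    constructor
    · linarith
    · linarith
  -- key lemma for arguments ≤ -R
  have keyB : ∀ x : ℝ, x ≤ -R → x - (nlms x : ℝ) * lam ∈ Set.Ico (-R) (-r) := by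
    intro x hx
    have hx0' : x ≤ 0 := by linarith
    rw [hnlms, if_pos hx0']
    set t := x / lam + R / lam with ht
    have ht2 : t = (x + R) / lam := by rw [ht]; ring
    have ht' : t * lam = x + R := by rw [ht2]; field_simp
    have htneg : t ≤ 0 := by
      rw [ht2]; exact div_nonpos_of_nonpos_of_nonneg (by linarith) hlam0.le
    have hm : mfloor t = ⌊t⌋ := by simp [mfloor, not_lt.mpr htneg]
    have h1 : ((⌊t⌋ : ℝ)) ≤ t := Int.floor_le t
    have h2 : t < (⌊t⌋ : ℝ) + 1 := Int.lt_floor_add_one t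
    rw [hm]
    have p1 := mul_le_mul_of_nonneg_right h1 hlam0.le
    have p2 := mul_lt_mul_of_pos_right h2 hlam0
    have p2' : ((⌊t⌋ : ℝ) + 1) * lam = (⌊t⌋ : ℝ) * lam + lam := by ring
    constructor
    · linarith
    · linarith
  -- claim 1
  have claim1 : ∀ y : ℝ, nlms y = 0 ↔ y ∈ Set.Icc (-R) R := by
    intro y
    by_cases hy : y ≤ 0
    · rw [hnlms, if_pos hy, mfloor_eq_zero_iff]
      set t := y / lam + R / lam with ht
      have ht2 : t = (y + R) / lam := by rw [ht]; ring
      have ht' : t * lam = y + R := by rw [ht2]; field_simp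
      constructor
      · rintro ⟨h1, _⟩
        have p1 := mul_le_mul_of_nonneg_right h1 hlam0.le
        rw [zero_mul] at p1
        exact ⟨by linarith, by linarith⟩
      · rintro ⟨h1, _⟩
        refine ⟨by rw [ht2]; exact div_nonneg (by linarith) hlam0.le, ?_⟩
        rw [ht2, div_le_one hlam0]
        linarith
    · push_neg at hy
      rw [hnlms, if_neg (not_le.mpr hy), mfloor_eq_zero_iff]
      set t := y / lam - r / lam with ht
      have ht2 : t = (y - r) / lam := by rw [ht]; ring
      have ht' : t * lam = y - r := by rw [ht2]; field_simp
      constructor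
      · rintro ⟨_, h2⟩
        have p2 := mul_le_mul_of_nonneg_right h2 hlam0.le
        rw [one_mul] at p2
        exact ⟨by linarith, by linarith⟩
      · rintro ⟨_, h2⟩
        refine ⟨by rw [ht2]; exact div_nonneg (by linarith) hlam0.le, ?_⟩
        rw [ht2, div_le_one hlam0]
        linarith
  refine ⟨claim1, fun x hx => keyA x (lt_of_lt_of_le hR0 hx), keyB, ?_, ?_⟩
  · rintro y ⟨h1, h2⟩
    rw [hF, if_neg (ne_of_lt h2)]
    have hx : 0 < -1 / y := div_pos_of_neg_of_neg (by norm_num) h2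
    obtain ⟨ha, hb⟩ := keyA (-1 / y) hx
    exact ⟨ha.le, hb⟩
  · rintro y ⟨h1, h2⟩
    rw [hF, if_neg (ne_of_gt h1)]
    have hx : -1 / y ≤ -R := by
      rw [div_le_iff₀ h1]
      nlinarith
    obtain ⟨ha, hb⟩ := keyB (-1 / y) hx
    exact ⟨ha, hb.le⟩
end

section
/- Let A = [[a,b],[c,d]] ∈ SL(2,ℝ) and set l_A(x) = (ax+b)(cx+d). Let η < ξ be real numbers with l_A(ξ) > 0 and l_A(η) < 0. Then D := ac(ξ+η) + ad + bc is nonzero, and the point w := (acξη − bd)/D + i·√(−l_A(ξ)·l_A(η))/|D| lies in the upper half-plane, lies on the geodesic γ(ξ,η), satisfies Re(A·w) = 0 with Im(A·w) > 0 (i.e. A·w lies on the positive imaginary axis), and g(w, ξ) = (ξ−η)·√(−l_A(ξ)/l_A(η)). -/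
open Real Complex

/-- For z in the upper half-plane and ξ ∈ ℝ, g(z, ξ) = |z − ξ|² / Im z. -/
noncomputable def gfun (z : ℂ) (ξ : ℝ) : ℝ := ‖z - (ξ : ℂ)‖ ^ 2 / z.im

theorem aux_intersection (a b c d ξ η s x y : ℝ) (hdet : a * d - b * c = 1)
    (hlt : η < ξ)
    (hlxi : 0 < (a * ξ + b) * (c * ξ + d))
    (hleta : (a * η + b) * (c * η + d) < 0)
    (hspos : 0 < s)
    (hs2 : s ^ 2 = -((a * ξ + b) * (c * ξ + d) * ((a * η + b) * (c * η + d))))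
    (hx : x = (a * c * ξ * η - b * d) / (a * c * (ξ + η) + a * d + b * c))
    (hy : y = s / (a * c * (ξ + η) + a * d + b * c)) :
    0 < ((x : ℂ) + (y : ℝ) * Complex.I).im ∧
      ‖((x : ℂ) + (y : ℝ) * Complex.I) - (((ξ + η) / 2 : ℝ) : ℂ)‖ = (ξ - η) / 2 ∧
      (((a : ℂ) * ((x : ℂ) + (y : ℝ) * Complex.I) + (b : ℂ)) /
        ((c : ℂ) * ((x : ℂ) + (y : ℝ) * Complex.I) + (d : ℂ))).re = 0 ∧
      0 < (((a : ℂ) * ((x : ℂ) + (y : ℝ) * Complex.I) + (b : ℂ)) /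
        ((c : ℂ) * ((x : ℂ) + (y : ℝ) * Complex.I) + (d : ℂ))).im ∧
      gfun ((x : ℂ) + (y : ℝ) * Complex.I) ξ = (ξ - η) *
        Real.sqrt (-((a * ξ + b) * (c * ξ + d)) / ((a * η + b) * (c * η + d))) := by
  have hxe : 0 < ξ - η := by linarith
  have hDpos : 0 < a * c * (ξ + η) + a * d + b * c := by nlinarith
  have hDne : (a * c * (ξ + η) + a * d + b * c) ≠ 0 := ne_of_gt hDpos
  have hsne : s ≠ 0 := ne_of_gt hspos
  have hypos : 0 < y := by rw [hy]; positivity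
  have hy2 : y ^ 2 = -((a * ξ + b) * (c * ξ + d) * ((a * η + b) * (c * η + d)))
      / (a * c * (ξ + η) + a * d + b * c) ^ 2 := by
    rw [hy, div_pow, hs2]
  have hwre : ((x : ℂ) + (y : ℝ) * Complex.I).re = x := by simp
  have hwim : ((x : ℂ) + (y : ℝ) * Complex.I).im = y := by simp
  have hL2ne : ((a * η + b) * (c * η + d)) ≠ 0 := ne_of_lt hleta
  refine ⟨by rw [hwim]; exact hypos, ?_, ?_, ?_, ?_⟩
  · -- geodesic
    have key : (x - (ξ + η) / 2) ^ 2 + y ^ 2 = ((ξ - η) / 2) ^ 2 := by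
      rw [hy2, hx]
      have hD' : a * (c * (ξ + η) + d) + c * b ≠ 0 := by intro h; apply hDne; linear_combination h
      field_simp
      ring
    have hsq : ‖((x : ℂ) + (y : ℝ) * Complex.I) - (((ξ + η) / 2 : ℝ) : ℂ)‖ ^ 2
        = ((ξ - η) / 2) ^ 2 := by
      rw [Complex.sq_norm, Complex.normSq_apply]
      simp only [Complex.sub_re, Complex.sub_im, Complex.add_re, Complex.add_im,
        Complex.mul_re, Complex.mul_im, Complex.ofReal_re, Complex.ofReal_im,
        Complex.I_re, Complex.I_im, mul_zero, mul_one, zero_mul, sub_zero, add_zero,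
        zero_add, zero_sub, sub_self]
      linear_combination key
    have h2 : ‖((x : ℂ) + (y : ℝ) * Complex.I) - (((ξ + η) / 2 : ℝ) : ℂ)‖
        = Real.sqrt (((ξ - η) / 2) ^ 2) := by
      rw [← hsq, Real.sqrt_sq (norm_nonneg _)]
    rw [h2, Real.sqrt_sq (by linarith)]
  · -- Re(Aw) = 0
    have hnum : (a * x + b) * (c * x + d) + a * c * y ^ 2 = 0 := by
      rw [hy2, hx]
      have hD' : a * (c * (ξ + η) + d) + c * b ≠ 0 := by intro h; apply hDne; linear_combination h
      field_simp
      ring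
    rw [Complex.div_re]
    simp only [Complex.add_re, Complex.add_im, Complex.mul_re, Complex.mul_im,
      Complex.ofReal_re, Complex.ofReal_im, Complex.I_re, Complex.I_im, mul_zero, mul_one,
      zero_mul, sub_zero, add_zero, zero_add, zero_sub, sub_self]
    rw [← add_div, div_eq_zero_iff]
    left
    linear_combination hnum
  · -- Im(Aw) > 0
    have hden : ((c : ℂ) * ((x : ℂ) + (y : ℝ) * Complex.I) + (d : ℂ)) ≠ 0 := by
      intro h
      have him : ((c : ℂ) * ((x : ℂ) + (y : ℝ) * Complex.I) + (d : ℂ)).im = 0 := by rw [h]; simp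
      have hre : ((c : ℂ) * ((x : ℂ) + (y : ℝ) * Complex.I) + (d : ℂ)).re = 0 := by rw [h]; simp
      simp only [Complex.add_re, Complex.add_im, Complex.mul_re, Complex.mul_im,
        Complex.ofReal_re, Complex.ofReal_im, Complex.I_re, Complex.I_im, mul_zero, mul_one,
        zero_mul, sub_zero, add_zero, zero_add, zero_sub, sub_self] at him hre
      have hc : c = 0 := by
        rcases mul_eq_zero.mp (by linarith : c * y = 0) with h0 | h0
        · exact h0
        · exact absurd h0 (ne_of_gt hypos)
      have hd : d = 0 := by rw [hc] at hre; simpa using hre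
      rw [hc, hd] at hdet
      simp at hdet
    have hN : 0 < Complex.normSq ((c : ℂ) * ((x : ℂ) + (y : ℝ) * Complex.I) + (d : ℂ)) :=
      Complex.normSq_pos.mpr hden
    rw [Complex.div_im]
    simp only [Complex.add_re, Complex.add_im, Complex.mul_re, Complex.mul_im,
      Complex.ofReal_re, Complex.ofReal_im, Complex.I_re, Complex.I_im, mul_zero, mul_one,
      zero_mul, sub_zero, add_zero, zero_add, zero_sub, sub_self]
    rw [div_sub_div_same]
    apply div_pos _ hN
    have him2 : a * y * (c * x + d) - (a * x + b) * (c * y) = y := by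
      linear_combination y * hdet
    nlinarith [him2, hypos]
  · -- gfun
    have hg : gfun ((x : ℂ) + (y : ℝ) * Complex.I) ξ = ((x - ξ) ^ 2 + y ^ 2) / y := by
      rw [gfun, Complex.sq_norm, Complex.normSq_apply]
      simp only [Complex.sub_re, Complex.sub_im, Complex.add_re, Complex.add_im,
        Complex.mul_re, Complex.mul_im, Complex.ofReal_re, Complex.ofReal_im,
        Complex.I_re, Complex.I_im, mul_zero, mul_one, zero_mul, sub_zero, add_zero,
        zero_add, zero_sub, sub_self]
      ring_nf
    have hxxi : x - ξ = -((a * ξ + b) * (c * ξ + d)) / (a * c * (ξ + η) + a * d + b * c) := by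
      rw [hx]
      have hD' : a * (c * (ξ + η) + d) + c * b ≠ 0 := by intro h; apply hDne; linear_combination h
      field_simp
      ring
    have hsqrt : Real.sqrt (-((a * ξ + b) * (c * ξ + d)) / ((a * η + b) * (c * η + d)))
        = (a * ξ + b) * (c * ξ + d) / s := by
      have h1 : -((a * ξ + b) * (c * ξ + d)) / ((a * η + b) * (c * η + d))
          = ((a * ξ + b) * (c * ξ + d) / s) ^ 2 := by
        rw [div_pow, hs2]
        rw [div_eq_div_iff hL2ne (by nlinarith)]
        ring
      rw [h1, Real.sqrt_sq (by positivity)]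
    rw [hg, hsqrt, hxxi, hy2, hy]
    have hD' : a * (c * (ξ + η) + d) + b * c ≠ 0 := by intro h; apply hDne; linear_combination h
    field_simp
    ring

/-- Let A = [[a,b],[c,d]] ∈ SL(2,ℝ), l_A(x) = (ax+b)(cx+d), η < ξ with
l_A(ξ) > 0 and l_A(η) < 0. Then D := ac(ξ+η)+ad+bc ≠ 0, and the point
w := (acξη − bd)/D + i√(−l_A(ξ)l_A(η))/|D| lies in ℍ, on the geodesic γ(ξ,η),
A·w lies on the positive imaginary axis, and g(w,ξ) = (ξ−η)√(−l_A(ξ)/l_A(η)). -/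
theorem intersection_with_geodesic (a b c d ξ η : ℝ) (hdet : a * d - b * c = 1)
    (hlt : η < ξ)
    (hlxi : 0 < (a * ξ + b) * (c * ξ + d))
    (hleta : (a * η + b) * (c * η + d) < 0) :
    (a * c * (ξ + η) + a * d + b * c) ≠ 0 ∧
    (let D : ℝ := a * c * (ξ + η) + a * d + b * c
     let w : ℂ := (((a * c * ξ * η - b * d) / D : ℝ) : ℂ) +
       (Real.sqrt (-((a * ξ + b) * (c * ξ + d) * ((a * η + b) * (c * η + d)))) / |D| : ℝ) *
         Complex.I
     0 < w.im ∧
       ‖w - (((ξ + η) / 2 : ℝ) : ℂ)‖ = (ξ - η) / 2 ∧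
       (((a : ℂ) * w + (b : ℂ)) / ((c : ℂ) * w + (d : ℂ))).re = 0 ∧
       0 < (((a : ℂ) * w + (b : ℂ)) / ((c : ℂ) * w + (d : ℂ))).im ∧
       gfun w ξ = (ξ - η) *
         Real.sqrt (-((a * ξ + b) * (c * ξ + d)) / ((a * η + b) * (c * η + d)))) := by
  have hxe : 0 < ξ - η := by linarith
  have hDpos : 0 < a * c * (ξ + η) + a * d + b * c := by nlinarith
  have hDne : (a * c * (ξ + η) + a * d + b * c) ≠ 0 := ne_of_gt hDpos
  have habsD : |a * c * (ξ + η) + a * d + b * c| = a * c * (ξ + η) + a * d + b * c :=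
    abs_of_pos hDpos
  have hprodpos : 0 < -((a * ξ + b) * (c * ξ + d) * ((a * η + b) * (c * η + d))) := by nlinarith
  refine ⟨hDne, ?_⟩
  exact aux_intersection a b c d ξ η _ _ _ hdet hlt hlxi hleta
    (Real.sqrt_pos.mpr hprodpos) (Real.sq_sqrt hprodpos.le) rfl (by rw [habsD])
end

section
/- Let c ∈ ℝ, ρ > 0 and let η, ξ be real numbers with η < c−ρ < ξ < c+ρ. Then ξ + η − 2c ≠ 0, and the point z := (ξη + ρ² − c²)/(ξ+η−2c) + i·√(((ξ−c)² − ρ²)(ρ² − (η−c)²))/|ξ+η−2c| lies in the upper half-plane, lies on the geodesic γ(ξ,η), lies on the circle |z − c| = ρ, and satisfies g(z, ξ) = (ξ−η)·√((ρ² − (ξ−c)²)/((η−c)² − ρ²)). -/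
open Real Complex

/-- Let c ∈ ℝ, ρ > 0 and η < c−ρ < ξ < c+ρ. Then ξ+η−2c ≠ 0, and
z := (ξη+ρ²−c²)/(ξ+η−2c) + i√(((ξ−c)²−ρ²)(ρ²−(η−c)²))/|ξ+η−2c| lies in ℍ, on the
geodesic γ(ξ,η), on the circle |z−c| = ρ, and
g(z,ξ) = (ξ−η)√((ρ²−(ξ−c)²)/((η−c)²−ρ²)). -/
theorem intersection_circular (c ρ ξ η : ℝ) (hρ : 0 < ρ)
    (h1 : η < c - ρ) (h2 : c - ρ < ξ) (h3 : ξ < c + ρ) :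
    ξ + η - 2 * c ≠ 0 ∧
    (let z : ℂ := (((ξ * η + ρ ^ 2 - c ^ 2) / (ξ + η - 2 * c) : ℝ) : ℂ) +
      (Real.sqrt (((ξ - c) ^ 2 - ρ ^ 2) * (ρ ^ 2 - (η - c) ^ 2)) / |ξ + η - 2 * c| : ℝ) *
        Complex.I
     0 < z.im ∧
       ‖z - (((ξ + η) / 2 : ℝ) : ℂ)‖ = (ξ - η) / 2 ∧
       ‖z - (c : ℂ)‖ = ρ ∧
       gfun z ξ = (ξ - η) *
         Real.sqrt ((ρ ^ 2 - (ξ - c) ^ 2) / ((η - c) ^ 2 - ρ ^ 2))) := by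
  have hd : ξ + η - 2 * c < 0 := by linarith
  have hd0 : ξ + η - 2 * c ≠ 0 := ne_of_lt hd
  have hu : (ξ - c) ^ 2 < ρ ^ 2 := by nlinarith
  have hv : ρ ^ 2 < (η - c) ^ 2 := by nlinarith
  set p := Real.sqrt (ρ ^ 2 - (ξ - c) ^ 2) with hp_def
  set q := Real.sqrt ((η - c) ^ 2 - ρ ^ 2) with hq_def
  have hp2 : p ^ 2 = ρ ^ 2 - (ξ - c) ^ 2 := Real.sq_sqrt (by linarith)
  have hq2 : q ^ 2 = (η - c) ^ 2 - ρ ^ 2 := Real.sq_sqrt (by linarith)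
  have hp_pos : 0 < p := Real.sqrt_pos.mpr (by linarith)
  have hq_pos : 0 < q := Real.sqrt_pos.mpr (by linarith)
  have hs : Real.sqrt (((ξ - c) ^ 2 - ρ ^ 2) * (ρ ^ 2 - (η - c) ^ 2)) = p * q := by
    rw [show ((ξ - c) ^ 2 - ρ ^ 2) * (ρ ^ 2 - (η - c) ^ 2)
        = (ρ ^ 2 - (ξ - c) ^ 2) * ((η - c) ^ 2 - ρ ^ 2) by ring,
      Real.sqrt_mul (by linarith), hp_def, hq_def]
  have habs : |ξ + η - 2 * c| = -(ξ + η - 2 * c) := abs_of_neg hd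
  refine ⟨hd0, ?_, ?_, ?_, ?_⟩
  · simp only [Complex.add_im, Complex.ofReal_im, Complex.mul_im, Complex.ofReal_re,
      Complex.I_im, Complex.I_re, mul_zero, mul_one, zero_add, zero_mul, add_zero, hs]
    exact div_pos (mul_pos hp_pos hq_pos) (abs_pos.mpr hd0)
  · rw [Complex.norm_def]
    simp only [Complex.normSq_apply, Complex.sub_re, Complex.add_re, Complex.ofReal_re,
      Complex.mul_re, Complex.I_re, Complex.I_im, Complex.ofReal_im, Complex.sub_im,
      Complex.add_im, Complex.mul_im, mul_zero, mul_one, zero_mul, sub_zero, zero_sub,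
      zero_add, add_zero, hs, habs]
    rw [show p * q / -(ξ + η - 2 * c) * (p * q / -(ξ + η - 2 * c))
        = p ^ 2 * q ^ 2 / (ξ + η - 2 * c) ^ 2 by
          rw [div_mul_div_comm, show -(ξ + η - 2 * c) * -(ξ + η - 2 * c) = (ξ + η - 2 * c) ^ 2
            by ring, show p * q * (p * q) = p ^ 2 * q ^ 2 by ring], hp2, hq2]
    rw [show ((ξ * η + ρ ^ 2 - c ^ 2) / (ξ + η - 2 * c) - (ξ + η) / 2) *
          ((ξ * η + ρ ^ 2 - c ^ 2) / (ξ + η - 2 * c) - (ξ + η) / 2) +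
        (ρ ^ 2 - (ξ - c) ^ 2) * ((η - c) ^ 2 - ρ ^ 2) / (ξ + η - 2 * c) ^ 2
        = ((ξ - η) / 2) ^ 2 by field_simp [hd0, (by rwa [mul_comm] at hd0 : ξ + η - c * 2 ≠ 0)]; ring]
    exact Real.sqrt_sq (by linarith)
  · rw [Complex.norm_def]
    simp only [Complex.normSq_apply, Complex.sub_re, Complex.add_re, Complex.ofReal_re,
      Complex.mul_re, Complex.I_re, Complex.I_im, Complex.ofReal_im, Complex.sub_im,
      Complex.add_im, Complex.mul_im, mul_zero, mul_one, zero_mul, sub_zero, zero_sub,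
      zero_add, add_zero, hs, habs]
    rw [show p * q / -(ξ + η - 2 * c) * (p * q / -(ξ + η - 2 * c))
        = p ^ 2 * q ^ 2 / (ξ + η - 2 * c) ^ 2 by
          rw [div_mul_div_comm, show -(ξ + η - 2 * c) * -(ξ + η - 2 * c) = (ξ + η - 2 * c) ^ 2
            by ring, show p * q * (p * q) = p ^ 2 * q ^ 2 by ring], hp2, hq2]
    rw [show ((ξ * η + ρ ^ 2 - c ^ 2) / (ξ + η - 2 * c) - c) *
          ((ξ * η + ρ ^ 2 - c ^ 2) / (ξ + η - 2 * c) - c) +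
        (ρ ^ 2 - (ξ - c) ^ 2) * ((η - c) ^ 2 - ρ ^ 2) / (ξ + η - 2 * c) ^ 2
        = ρ ^ 2 by field_simp [hd0, (by rwa [mul_comm] at hd0 : ξ + η - c * 2 ≠ 0)]; ring]
    exact Real.sqrt_sq (by linarith)
  · unfold gfun
    rw [Complex.sq_norm]
    simp only [Complex.normSq_apply, Complex.sub_re, Complex.add_re, Complex.ofReal_re,
      Complex.mul_re, Complex.I_re, Complex.I_im, Complex.ofReal_im, Complex.sub_im,
      Complex.add_im, Complex.mul_im, mul_zero, mul_one, zero_mul, sub_zero, zero_sub,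
      zero_add, add_zero, hs, habs]
    rw [Real.sqrt_div (by linarith : (0:ℝ) ≤ ρ ^ 2 - (ξ - c) ^ 2), ← hp_def, ← hq_def]
    rw [show (ξ * η + ρ ^ 2 - c ^ 2) / (ξ + η - 2 * c) - ξ
        = p ^ 2 / (ξ + η - 2 * c) by rw [hp2]; field_simp [hd0, (by rwa [mul_comm] at hd0 : ξ + η - c * 2 ≠ 0)]; ring]
    have hq2' : q ^ 2 = (η - ξ) * (ξ + η - 2 * c) - p ^ 2 := by rw [hp2, hq2]; ring
    field_simp [hd0, hp_pos.ne', hq_pos.ne']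
    linear_combination (-1) * hq2'
end

section
/- Let q ≥ 4 be even. Then in SL(2,ℝ) one has (T·S)^{q/2} = (1/sin(π/q)) · [[λ/2, −1],[1, −λ/2]]; in particular the Möbius transformation (T·S)^{q/2} is the elliptic involution x ↦ (λx − 2)/(2x − λ) fixing ρ = e^{iπ/q}. -/
open Matrix Real Complex

/-- The Möbius action of a real 2×2 matrix on ℂ. -/
noncomputable def moebC (A : Matrix (Fin 2) (Fin 2) ℝ) (z : ℂ) : ℂ :=
  ((A 0 0 : ℂ) * z + (A 0 1 : ℂ)) / ((A 1 0 : ℂ) * z + (A 1 1 : ℂ))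

/-- Let q ≥ 4 be even. Then (T·S)^{q/2} = (1/sin(π/q))·[[λ/2,−1],[1,−λ/2]];
in particular the Möbius transformation (T·S)^{q/2} is the elliptic involution
x ↦ (λx−2)/(2x−λ) fixing ρ = e^{iπ/q}. -/
theorem TS_half_power_even (q : ℕ) (hq : 4 ≤ q) (hqe : Even q)
    (lam : ℝ) (hlam : lam = 2 * Real.cos (Real.pi / q))
    (S T : Matrix (Fin 2) (Fin 2) ℝ)
    (hS : S = !![0, -1; 1, 0]) (hT : T = !![1, lam; 0, 1]) :
    (T * S) ^ (q / 2) = (Real.sin (Real.pi / q))⁻¹ • !![lam / 2, -1; 1, -(lam / 2)] ∧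
      (∀ x : ℝ, moeb ((T * S) ^ (q / 2)) x = (lam * x - 2) / (2 * x - lam)) ∧
      moebC ((T * S) ^ (q / 2)) (Complex.exp ((Real.pi / q : ℝ) * Complex.I)) =
        Complex.exp ((Real.pi / q : ℝ) * Complex.I) := by
  have hq0 : (0:ℝ) < (q:ℝ) := by positivity
  set θ : ℝ := Real.pi / q with hθ
  have hlam2 : 2 * Real.cos θ = lam := hlam.symm
  have hθpos : 0 < θ := div_pos Real.pi_pos hq0
  have hθlt : θ < Real.pi := by
    have h1 : (1:ℝ) < (q:ℝ) := by exact_mod_cast (by omega : 1 < q)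
    rw [hθ, div_lt_iff₀ hq0]
    nlinarith [Real.pi_pos]
  have hs : 0 < Real.sin θ := Real.sin_pos_of_pos_of_lt_pi hθpos hθlt
  have hsne : Real.sin θ ≠ 0 := ne_of_gt hs
  have hTS : T * S = !![lam, -1; 1, 0] := by
    subst hS hT
    ext i j
    fin_cases i <;> fin_cases j <;>
      simp [Matrix.mul_apply, Fin.sum_univ_two]
  have trig : ∀ x : ℝ, Real.sin (x + θ) = lam * Real.sin x - Real.sin (x - θ) := by
    intro x
    rw [Real.sin_add, Real.sin_sub, ← hlam2]
    ring
  have key : ∀ n : ℕ, (T * S) ^ (n + 1) =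
      (Real.sin θ)⁻¹ • !![Real.sin (((n:ℝ) + 2) * θ), -Real.sin (((n:ℝ) + 1) * θ);
        Real.sin (((n:ℝ) + 1) * θ), -Real.sin ((n:ℝ) * θ)] := by
    intro n
    induction n with
    | zero =>
      rw [pow_one, hTS]
      ext i j
      fin_cases i <;> fin_cases j <;>
        simp [Matrix.smul_apply]
      · rw [Real.sin_two_mul]
        field_simp
        linear_combination (-1:ℝ) * hlam2
      · rw [inv_mul_cancel₀ hsne]
      · rw [inv_mul_cancel₀ hsne]
    | succ n ih =>
      rw [pow_succ, ih, hTS, Matrix.smul_mul]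
      congr 1
      ext i j
      fin_cases i <;> fin_cases j <;>
        simp [Matrix.mul_apply, Fin.sum_univ_two]
      · have := trig (((n:ℝ) + 2) * θ)
        rw [show ((n:ℝ) + 2) * θ + θ = ((n:ℝ) + 1 + 2) * θ by ring,
          show ((n:ℝ) + 2) * θ - θ = ((n:ℝ) + 1) * θ by ring] at this
        linarith
      · ring_nf
      · have := trig (((n:ℝ) + 1) * θ)
        rw [show ((n:ℝ) + 1) * θ + θ = ((n:ℝ) + 1 + 1) * θ by ring,
          show ((n:ℝ) + 1) * θ - θ = ((n:ℝ)) * θ by ring] at this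
        linarith
  obtain ⟨k, hk⟩ := hqe
  have hk2 : 2 ≤ k := by omega
  have hhalf : q / 2 = (k - 1) + 1 := by omega
  have hkθ : (k:ℝ) * θ = Real.pi / 2 := by
    rw [hθ, show (q:ℝ) = 2 * (k:ℝ) by exact_mod_cast congrArg Nat.cast (by omega : q = 2 * k)]
    have hk0 : (k:ℝ) ≠ 0 := by positivity
    field_simp
  have hcast : ((k - 1 : ℕ) : ℝ) = (k:ℝ) - 1 := by
    have h1 : (1:ℕ) ≤ k := by omega
    push_cast [Nat.cast_sub h1]
    ring
  have hc2 : lam / 2 = Real.cos θ := by rw [← hlam2]; ring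
  have hM : (T * S) ^ (q / 2) =
      (Real.sin θ)⁻¹ • !![lam / 2, -1; 1, -(lam / 2)] := by
    rw [hhalf, key (k - 1)]
    congr 1
    have h1 : (((k - 1 : ℕ):ℝ) + 2) * θ = Real.pi / 2 + θ := by
      rw [hcast]; nlinarith [hkθ]
    have h2 : (((k - 1 : ℕ):ℝ) + 1) * θ = Real.pi / 2 := by
      rw [hcast]; nlinarith [hkθ]
    have h3 : ((k - 1 : ℕ):ℝ) * θ = Real.pi / 2 - θ := by
      rw [hcast]; nlinarith [hkθ]
    have h4 : Real.sin (Real.pi / 2 + θ) = Real.cos θ := by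
      rw [Real.sin_add, Real.sin_pi_div_two, Real.cos_pi_div_two]
      ring
    rw [h1, h2, h3, Real.sin_pi_div_two, Real.sin_pi_div_two_sub, h4, hc2]
  refine ⟨hM, ?_, ?_⟩
  · intro x
    rw [hM]
    simp only [moeb, Matrix.smul_apply, smul_eq_mul]
    norm_num
    rw [show (Real.sin θ)⁻¹ * (lam / 2) * x + -(Real.sin θ)⁻¹
          = (Real.sin θ)⁻¹ * (lam / 2 * x - 1) by ring,
        show (Real.sin θ)⁻¹ * x + -((Real.sin θ)⁻¹ * (lam / 2))
          = (Real.sin θ)⁻¹ * (x - lam / 2) by ring,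
        mul_div_mul_left _ _ (inv_ne_zero hsne),
        show lam * x - 2 = 2 * (lam / 2 * x - 1) by ring,
        show 2 * x - lam = 2 * (x - lam / 2) by ring,
        mul_div_mul_left _ _ (two_ne_zero)]
  · rw [hM]
    set z : ℂ := Complex.exp ((θ:ℝ) * Complex.I) with hz
    have hzval : z = (Real.cos θ : ℂ) + (Real.sin θ : ℂ) * Complex.I := by
      rw [hz, Complex.exp_mul_I]
      norm_cast
    have hsC : Complex.sin (θ:ℂ) ≠ 0 := by
      rw [← Complex.ofReal_sin]
      exact_mod_cast hsne
    have hzz : z * z = (lam:ℂ) * z - 1 := by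
      rw [hzval, ← hlam2]
      push_cast
      try simp only [Complex.ofReal_sin, Complex.ofReal_cos]
      linear_combination (Complex.sin (θ:ℂ))^2 * Complex.I_sq - Complex.sin_sq_add_cos_sq (θ:ℂ)
    have hdne : z - (lam:ℂ) / 2 ≠ 0 := by
      have h : z - (lam:ℂ) / 2 = Complex.sin (θ:ℂ) * Complex.I := by
        rw [hzval, ← hlam2]
        push_cast
        try simp only [Complex.ofReal_sin, Complex.ofReal_cos]
        ring
      rw [h]
      exact mul_ne_zero hsC Complex.I_ne_zero
    simp only [moebC, Matrix.smul_apply, smul_eq_mul]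
    norm_num
    rw [show (Complex.sin ↑θ)⁻¹ * (↑lam / 2) * z + -(Complex.sin ↑θ)⁻¹
          = (Complex.sin ↑θ)⁻¹ * ((↑lam / 2) * z - 1) by ring,
        show (Complex.sin ↑θ)⁻¹ * z + -((Complex.sin ↑θ)⁻¹ * (↑lam / 2))
          = (Complex.sin ↑θ)⁻¹ * (z - ↑lam / 2) by ring,
        mul_div_mul_left _ _ (inv_ne_zero hsC),
        div_eq_iff hdne]
    linear_combination (-1:ℂ) * hzz
end

section
/- Let q ≥ 4 be even and h = (q−2)/2. Then the Möbius transformation (S·T)^h maps λ/2 to −λ³/(λ² + 4). Consequently, for ξ ∈ (−λ/2, 1−λ) whose regular λ-fraction has the form [0; 1^{h−1}, a_h, …], one has a_h = 1 precisely when ξ < −λ³/(λ²+4). -/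
open Matrix Real

lemma ST_pow_aux (lam θ : ℝ) (hlam : lam = 2 * Real.cos θ) (n : ℕ) :
    Real.sin θ • ((!![0, -1; 1, lam] : Matrix (Fin 2) (Fin 2) ℝ)) ^ (n + 1)
      = !![-Real.sin (n * θ), -Real.sin ((n + 1) * θ);
           Real.sin ((n + 1) * θ), Real.sin ((n + 2) * θ)] := by
  induction n with
  | zero =>
    ext i j
    fin_cases i <;> fin_cases j <;>
      simp [hlam, Real.sin_two_mul, Matrix.smul_apply] <;> ring
  | succ n ih =>
    have hstep : ((!![0, -1; 1, lam] : Matrix (Fin 2) (Fin 2) ℝ)) ^ (n + 2)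
        = ((!![0, -1; 1, lam] : Matrix (Fin 2) (Fin 2) ℝ)) ^ (n + 1) * !![0, -1; 1, lam] :=
      pow_succ _ _
    have key : ∀ a : ℝ, Real.sin (a + θ) = 2 * Real.cos θ * Real.sin a - Real.sin (a - θ) := by
      intro a; rw [Real.sin_add, Real.sin_sub]; ring
    have k1 : Real.sin (((n:ℝ) + 2) * θ)
        = 2 * Real.cos θ * Real.sin (((n:ℝ) + 1) * θ) - Real.sin ((n:ℝ) * θ) := by
      have := key (((n:ℝ) + 1) * θ)
      rw [show ((n:ℝ)+1)*θ+θ = ((n:ℝ)+2)*θ by ring,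
        show ((n:ℝ)+1)*θ-θ = (n:ℝ)*θ by ring] at this
      exact this
    have k2 : Real.sin (((n:ℝ) + 3) * θ)
        = 2 * Real.cos θ * Real.sin (((n:ℝ) + 2) * θ) - Real.sin (((n:ℝ) + 1) * θ) := by
      have := key (((n:ℝ) + 2) * θ)
      rw [show ((n:ℝ)+2)*θ+θ = ((n:ℝ)+3)*θ by ring,
        show ((n:ℝ)+2)*θ-θ = ((n:ℝ)+1)*θ by ring] at this
      exact this
    rw [show n + 1 + 1 = n + 2 from rfl, hstep, ← smul_mul_assoc, ih, Matrix.mul_fin_two]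
    ext i j
    fin_cases i <;> fin_cases j
    · simp
    · simp [hlam]
      rw [show ((n:ℝ)+1+1)*θ = ((n:ℝ)+2)*θ by ring]
      linear_combination k1
    · simp
      rw [show ((n:ℝ)+1+1)*θ = ((n:ℝ)+2)*θ by ring]
    · simp [hlam]
      rw [show ((n:ℝ)+1+2)*θ = ((n:ℝ)+3)*θ by ring]
      linear_combination -k2

/-- Let q ≥ 4 be even and h = (q−2)/2. Then the Möbius transformation
(S·T)^h maps λ/2 to −λ³/(λ²+4). -/
theorem ST_h_maps_half_lambda (q : ℕ) (hq : 4 ≤ q) (hqe : Even q)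
    (lam : ℝ) (hlam : lam = 2 * Real.cos (Real.pi / q))
    (S T : Matrix (Fin 2) (Fin 2) ℝ)
    (hS : S = !![0, -1; 1, 0]) (hT : T = !![1, lam; 0, 1])
    (h : ℕ) (hh : h = (q - 2) / 2) :
    moeb ((S * T) ^ h) (lam / 2) = -lam ^ 3 / (lam ^ 2 + 4) := by
  set θ := Real.pi / q with hθ
  have hq0 : (q : ℝ) ≠ 0 := by positivity
  have hq2 : 2 * h + 2 = q := by
    have := hqe.two_dvd
    omega
  have hST : S * T = !![0, -1; 1, lam] := by
    rw [hS, hT, Matrix.mul_fin_two]; norm_num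
  -- sin θ positive
  have hθpos : 0 < θ := by
    rw [hθ]; positivity
  have hq4 : (4:ℝ) ≤ (q:ℝ) := by exact_mod_cast hq
  have hθlt : θ < Real.pi := by
    rw [hθ, div_lt_iff₀ (by linarith)]
    nlinarith [Real.pi_pos]
  have hs : Real.sin θ ≠ 0 := ne_of_gt (Real.sin_pos_of_pos_of_lt_pi hθpos hθlt)
  -- h = k + 1
  obtain ⟨k, hk⟩ : ∃ k, h = k + 1 := ⟨h - 1, by omega⟩
  have hhalf : ((h : ℝ) + 1) * θ = Real.pi / 2 := by
    have : ((h : ℝ) + 1) = (q : ℝ) / 2 := by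
      have h2 : ((h:ℕ) + 1) * 2 = q := by omega
      field_simp
      exact_mod_cast h2
    rw [this, hθ]; field_simp
  have hA := ST_pow_aux lam θ hlam k
  rw [← hk] at hA
  -- entry values
  have hs1 : Real.sin (((k : ℝ) + 2) * θ) = 1 := by
    have : ((k : ℝ) + 2) * θ = ((h : ℝ) + 1) * θ := by rw [hk]; push_cast; ring
    rw [this, hhalf, Real.sin_pi_div_two]
  have hs2 : Real.sin (((k : ℝ) + 1) * θ) = Real.cos θ := by
    have : ((k : ℝ) + 1) * θ = Real.pi / 2 - θ := by
      rw [← hhalf, hk]; push_cast; ring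
    rw [this, Real.sin_pi_div_two_sub]
  have hs3 : Real.sin ((k : ℕ) * θ) = Real.cos (2 * θ) := by
    have : (k : ℝ) * θ = Real.pi / 2 - 2 * θ := by
      rw [← hhalf, hk]; push_cast; ring
    rw [this, Real.sin_pi_div_two_sub]
  -- extract entries
  have h00 : Real.sin θ * ((S * T) ^ h) 0 0 = -Real.cos (2 * θ) := by
    have := congrFun (congrFun hA 0) 0
    simpa [hST, Matrix.smul_apply, hs3] using this
  have h01 : Real.sin θ * ((S * T) ^ h) 0 1 = -Real.cos θ := by
    have := congrFun (congrFun hA 0) 1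
    simpa [hST, Matrix.smul_apply, hs2] using this
  have h10 : Real.sin θ * ((S * T) ^ h) 1 0 = Real.cos θ := by
    have := congrFun (congrFun hA 1) 0
    simpa [hST, Matrix.smul_apply, hs2] using this
  have h11 : Real.sin θ * ((S * T) ^ h) 1 1 = 1 := by
    have := congrFun (congrFun hA 1) 1
    simpa [hST, Matrix.smul_apply, hs1] using this
  set A := (S * T) ^ h
  have hc : lam = 2 * Real.cos θ := hlam
  set c := Real.cos θ with hcdef
  have hc2 : Real.cos (2 * θ) = 2 * c ^ 2 - 1 := by
    rw [Real.cos_two_mul]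
  have hden : c ^ 2 + 1 ≠ 0 := by positivity
  unfold moeb
  have hAden : A 1 0 * (lam / 2) + A 1 1 ≠ 0 := by
    intro hz
    have : Real.sin θ * (A 1 0 * (lam / 2) + A 1 1) = c * (lam / 2) + 1 := by
      rw [mul_add, ← mul_assoc, h10, h11]
    rw [hz, mul_zero] at this
    rw [hc] at this
    nlinarith
  rw [div_eq_div_iff hAden (by positivity)]
  have expand : Real.sin θ * ((A 0 0 * (lam / 2) + A 0 1) * (lam ^ 2 + 4))
      = Real.sin θ * (-lam ^ 3 * (A 1 0 * (lam / 2) + A 1 1)) := by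
    have lhs : Real.sin θ * ((A 0 0 * (lam / 2) + A 0 1) * (lam ^ 2 + 4))
        = (Real.sin θ * A 0 0 * (lam / 2) + Real.sin θ * A 0 1) * (lam ^ 2 + 4) := by ring
    have rhs : Real.sin θ * (-lam ^ 3 * (A 1 0 * (lam / 2) + A 1 1))
        = -lam ^ 3 * (Real.sin θ * A 1 0 * (lam / 2) + Real.sin θ * A 1 1) := by ring
    rw [lhs, rhs, h00, h01, h10, h11, hc, hc2]
    ring
  exact mul_left_cancel₀ hs expand
end

section
/- Let q ≥ 3 be odd, λ = 2cos(π/q), and let R be the unique positive root of x² + (2−λ)x − 1 = 0. Then 2λ > R + 1, and consequently (1 − λ/2)·(5λ/2 − R) > sin²(π/q). -/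
open Real

/-- Let q ≥ 3 be odd, λ = 2cos(π/q), and R the unique positive root of
x² + (2−λ)x − 1 = 0. Then 2λ > R + 1, and consequently
(1 − λ/2)(5λ/2 − R) > sin²(π/q). -/
theorem two_lambda_gt (q : ℕ) (hq : 3 ≤ q) (hqo : Odd q)
    (lam : ℝ) (hlam : lam = 2 * Real.cos (Real.pi / q))
    (R : ℝ) (hR : R = ((lam - 2) + Real.sqrt ((2 - lam) ^ 2 + 4)) / 2) :
    2 * lam > R + 1 ∧
      (1 - lam / 2) * (5 * lam / 2 - R) > Real.sin (Real.pi / q) ^ 2 := by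
  have hq3 : (3 : ℝ) ≤ (q : ℝ) := by exact_mod_cast hq
  have hqpos : (0 : ℝ) < q := by linarith
  have hple : Real.pi / q ≤ Real.pi / 3 := by
    apply div_le_div_of_nonneg_left Real.pi_pos.le (by norm_num) hq3
  have hppos : 0 < Real.pi / q := div_pos Real.pi_pos hqpos
  have hlam1 : 1 ≤ lam := by
    have := Real.cos_le_cos_of_nonneg_of_le_pi hppos.le
      (by linarith [Real.pi_pos]) hple
    rw [Real.cos_pi_div_three] at this
    rw [hlam]; linarith
  have hlam2 : lam < 2 := by
    have := Real.cos_lt_cos_of_nonneg_of_le_pi (le_refl (0:ℝ))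
      (by linarith [Real.pi_pos, Real.pi_pos.le]) hppos
    rw [Real.cos_zero] at this
    rw [hlam]; linarith
  set s := Real.sqrt ((2 - lam) ^ 2 + 4) with hs
  have hs0 : 0 ≤ s := Real.sqrt_nonneg _
  have hs2 : s ^ 2 = (2 - lam) ^ 2 + 4 := Real.sq_sqrt (by positivity)
  have hslt : s < 3 * lam := by nlinarith
  have h1 : 2 * lam > R + 1 := by rw [hR]; linarith
  refine ⟨h1, ?_⟩
  have hsin : Real.sin (Real.pi / q) ^ 2 = 1 - lam ^ 2 / 4 := by
    have := Real.sin_sq_add_cos_sq (Real.pi / q)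
    rw [hlam]; nlinarith
  rw [hsin]
  nlinarith
end
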